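/- Let T_1, ..., T_d be independent random variables with survival functions S_1, ..., S_d, let S̄ = (1/d)∑_i S_i, and define p_i = -∫ S_i^± dS̄ (the Lebesgue–Stieltjes integral against the measure induced by S̄). Then (1/d) ∑_{i=1}^d p_i = 1/2. -/

import Mathlib

open MeasureTheory Set
open scoped ENNReal

lemma meas_Ioi (μ : Measure ℝ) : Measurable fun t => μ (Ioi t) :=
  Antitone.measurable (fun _ _ h => measure_mono (Ioi_subset_Ioi h))

lemma meas_Ici (μ : Measure ℝ) : Measurable fun t => μ (Ici t) :=
  Antitone.measurable (fun _ _ h => measure_mono (Ici_subset_Ici.2 h))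

lemma lint_Ioi (μ ν : Measure ℝ) [SFinite ν] :
    ∫⁻ t, ν (Ioi t) ∂μ = (μ.prod ν) {p : ℝ × ℝ | p.1 < p.2} := by
  rw [Measure.prod_apply (measurableSet_lt measurable_fst measurable_snd)]
  rfl

lemma lint_Ici (μ ν : Measure ℝ) [SFinite ν] :
    ∫⁻ t, ν (Ici t) ∂μ = (μ.prod ν) {p : ℝ × ℝ | p.1 ≤ p.2} := by
  rw [Measure.prod_apply (measurableSet_le measurable_fst measurable_snd)]
  rfl

lemma pair (μ ν : Measure ℝ) [IsProbabilityMeasure μ] [IsProbabilityMeasure ν] :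
    (∫⁻ t, (ν (Ioi t) + ν (Ici t)) ∂μ) + (∫⁻ t, (μ (Ioi t) + μ (Ici t)) ∂ν) = 2 := by
  rw [lintegral_add_left (meas_Ioi ν), lintegral_add_left (meas_Ioi μ),
    lint_Ioi, lint_Ici, lint_Ioi, lint_Ici]
  have hswap : ν.prod μ = (μ.prod ν).map Prod.swap := (Measure.prod_swap).symm
  have h1 : (ν.prod μ) {p : ℝ × ℝ | p.1 < p.2} = (μ.prod ν) {p : ℝ × ℝ | p.2 < p.1} := by
    rw [hswap, Measure.map_apply measurable_swap (measurableSet_lt measurable_fst measurable_snd)]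
    rfl
  have h2 : (ν.prod μ) {p : ℝ × ℝ | p.1 ≤ p.2} = (μ.prod ν) {p : ℝ × ℝ | p.2 ≤ p.1} := by
    rw [hswap, Measure.map_apply measurable_swap (measurableSet_le measurable_fst measurable_snd)]
    rfl
  rw [h1, h2]
  have c1 : {p : ℝ × ℝ | p.2 ≤ p.1} = {p : ℝ × ℝ | p.1 < p.2}ᶜ := by
    ext p; simp [not_lt]
  have c2 : {p : ℝ × ℝ | p.2 < p.1} = {p : ℝ × ℝ | p.1 ≤ p.2}ᶜ := by
    ext p; simp [not_le]
  have e1 : (μ.prod ν) {p : ℝ × ℝ | p.1 < p.2} + (μ.prod ν) {p : ℝ × ℝ | p.2 ≤ p.1} = 1 := by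
    rw [c1, measure_add_measure_compl (measurableSet_lt measurable_fst measurable_snd), measure_univ]
  have e2 : (μ.prod ν) {p : ℝ × ℝ | p.1 ≤ p.2} + (μ.prod ν) {p : ℝ × ℝ | p.2 < p.1} = 1 := by
    rw [c2, measure_add_measure_compl (measurableSet_le measurable_fst measurable_snd), measure_univ]
  calc _ = ((μ.prod ν) {p : ℝ × ℝ | p.1 < p.2} + (μ.prod ν) {p : ℝ × ℝ | p.2 ≤ p.1})
        + ((μ.prod ν) {p : ℝ × ℝ | p.1 ≤ p.2} + (μ.prod ν) {p : ℝ × ℝ | p.2 < p.1}) := by ring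
    _ = 2 := by rw [e1, e2]; norm_num

/-- With `S̄` the average of the survival functions (i.e. the survival function of the
average measure `ν = (1/d) ∑ μ j`) and `p i = -∫ S_i^± dS̄ = ∫ S_i^± dν`,
the mean of the effects is `1/2`. -/
theorem stmt2 {d : ℕ} (hd : 0 < d) (μ : Fin d → Measure ℝ)
    (hprob : ∀ i, IsProbabilityMeasure (μ i)) :
    (1 / d : ℝ) *
        ∑ i, ∫ t, ((μ i (Ioi t)).toReal + (μ i (Ici t)).toReal) / 2
          ∂((d : ℝ≥0∞)⁻¹ • ∑ j, μ j)
      = 1 / 2 := by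
  haveI := hprob
  set ν : Measure ℝ := (d : ℝ≥0∞)⁻¹ • ∑ j, μ j with hν
  set a : Fin d → Fin d → ℝ≥0∞ := fun i j => ∫⁻ t, (μ i (Ioi t) + μ i (Ici t)) ∂(μ j) with ha
  have hdE : (d : ℝ≥0∞) ≠ 0 := by exact_mod_cast hd.ne'
  have ha_le : ∀ i j, a i j ≤ 2 := by
    intro i j
    calc a i j ≤ ∫⁻ _, 2 ∂(μ j) := lintegral_mono fun t => by
          have h1 : μ i (Ioi t) ≤ 1 := prob_le_one
          have h2 : μ i (Ici t) ≤ 1 := prob_le_one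
          calc μ i (Ioi t) + μ i (Ici t) ≤ 1 + 1 := add_le_add h1 h2
            _ = 2 := by norm_num
      _ = 2 := by simp
  have hpair : ∀ i j, a i j + a j i = 2 := fun i j => pair (μ j) (μ i)
  -- total double sum
  have hS : ∑ i, ∑ j, a i j = (d : ℝ≥0∞) * d := by
    have hsum2 : (∑ i, ∑ j, a i j) + (∑ i, ∑ j, a i j) = 2 * ((d : ℝ≥0∞) * d) := by
      nth_rewrite 2 [Finset.sum_comm]
      rw [← Finset.sum_add_distrib]
      simp_rw [← Finset.sum_add_distrib, hpair]
      simp [mul_comm, mul_assoc]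
    have := hsum2
    rw [← two_mul] at this
    exact (ENNReal.mul_right_inj two_ne_zero (by norm_num)).mp this
  -- each integral
  have hGi : ∀ i, (∫ t, ((μ i (Ioi t)).toReal + (μ i (Ici t)).toReal) / 2 ∂ν)
      = (∫⁻ t, (μ i (Ioi t) + μ i (Ici t)) ∂ν).toReal / 2 := by
    intro i
    have hfin : ∀ t, μ i (Ioi t) + μ i (Ici t) < ∞ :=
      fun t => ENNReal.add_lt_top.2 ⟨measure_lt_top _ _, measure_lt_top _ _⟩
    have heq : ∀ t, ((μ i (Ioi t)).toReal + (μ i (Ici t)).toReal)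
        = (μ i (Ioi t) + μ i (Ici t)).toReal := fun t =>
      (ENNReal.toReal_add (measure_ne_top _ _) (measure_ne_top _ _)).symm
    simp_rw [heq, div_eq_mul_inv, integral_mul_const]
    rw [integral_toReal (f := fun t => μ i (Ioi t) + μ i (Ici t)) (((meas_Ioi (μ i)).add (meas_Ici (μ i))).aemeasurable)
      (Filter.Eventually.of_forall hfin)]
  have hνsum : ∀ i, (∫⁻ t, (μ i (Ioi t) + μ i (Ici t)) ∂ν) = (d : ℝ≥0∞)⁻¹ * ∑ j, a i j := by
    intro i
    rw [hν, lintegral_smul_measure, lintegral_finset_sum_measure]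
    rfl
  have htot : ∑ i, (∫⁻ t, (μ i (Ioi t) + μ i (Ici t)) ∂ν) = (d : ℝ≥0∞) := by
    simp_rw [hνsum]
    rw [← Finset.mul_sum, hS, ← mul_assoc, ENNReal.inv_mul_cancel hdE (by simp), one_mul]
  have hfinG : ∀ i ∈ Finset.univ, (∫⁻ t, (μ i (Ioi t) + μ i (Ici t)) ∂ν) ≠ ∞ := by
    intro i _
    have : (∫⁻ t, (μ i (Ioi t) + μ i (Ici t)) ∂ν) ≤ ∑ i', (∫⁻ t, (μ i' (Ioi t) + μ i' (Ici t)) ∂ν) :=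
      Finset.single_le_sum (f := fun i' => ∫⁻ t, (μ i' (Ioi t) + μ i' (Ici t)) ∂ν)
        (fun _ _ => zero_le) (Finset.mem_univ i)
    rw [htot] at this
    exact (lt_of_le_of_lt this (ENNReal.natCast_lt_top d)).ne
  simp_rw [hGi]
  rw [← Finset.sum_div, ← ENNReal.toReal_sum hfinG, htot]
  field_simp
  simp
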